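/- Let F : (0, ∞) → (0, 1) be a strictly increasing continuous bijection, let t > 0, and set p := log(1 − F(t)) (so p < 0). Let Y be a random variable following the exponential distribution with rate 1. Then the random variable X := F^{-1}(1 − exp(−(Y − p))) is almost surely well-defined and its law is the distribution with CDF F conditioned on (t, ∞); that is, for every x > t, P(X ≤ x) = (F(x) − F(t))/(1 − F(t)), and P(X ≤ x) = 0 for x ≤ t. -/

import Mathlib

open MeasureTheory ProbabilityTheory

lemma expM_Iic (c : ℝ) :
    expMeasure 1 (Set.Iic c) = ENNReal.ofReal (if 0 ≤ c then 1 - Real.exp (-c) else 0) := by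
  rw [expMeasure, gammaMeasure, withDensity_apply _ measurableSet_Iic]
  have h : gammaPDF 1 1 = exponentialPDF 1 := rfl
  rw [h, lintegral_exponentialPDF_eq_antiDeriv one_pos]
  simp

lemma expM_Iic_zero : expMeasure 1 (Set.Iic (0:ℝ)) = 0 := by
  rw [expM_Iic]; simp

/-- Let `F : (0, ∞) → (0, 1)` be a strictly increasing continuous bijection, let `t > 0`,
and set `p := log(1 − F(t))` (so `p < 0`). Let `Y` be a random variable following the
exponential distribution with rate 1. Then the random variable
`X := F⁻¹(1 − exp(−(Y − p)))` is almost surely well-defined and its law is the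
distribution with CDF `F` conditioned on `(t, ∞)`; that is, for every `x > t`,
`P(X ≤ x) = (F(x) − F(t))/(1 − F(t))`, and `P(X ≤ x) = 0` for `x ≤ t`. -/
theorem stmt_13 (F Finv : ℝ → ℝ) (t p : ℝ) (ht : 0 < t)
    (hF_mono : StrictMonoOn F (Set.Ioi 0))
    (hF_cont : ContinuousOn F (Set.Ioi 0))
    (hF_bij : Set.BijOn F (Set.Ioi 0) (Set.Ioo 0 1))
    (hFinv : ∀ u ∈ Set.Ioo (0 : ℝ) 1, Finv u ∈ Set.Ioi (0 : ℝ) ∧ F (Finv u) = u)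
    (hp : p = Real.log (1 - F t)) :
    p < 0 ∧
      (∀ᵐ y ∂(expMeasure 1), 1 - Real.exp (-(y - p)) ∈ Set.Ioo (0 : ℝ) 1) ∧
      (∀ x : ℝ, t < x →
        (expMeasure 1) {y : ℝ | Finv (1 - Real.exp (-(y - p))) ≤ x} =
          ENNReal.ofReal ((F x - F t) / (1 - F t))) ∧
      ∀ x : ℝ, x ≤ t →
        (expMeasure 1) {y : ℝ | Finv (1 - Real.exp (-(y - p))) ≤ x} = 0 := by
  have hFt : F t ∈ Set.Ioo (0:ℝ) 1 := hF_bij.mapsTo ht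
  have h1Ft : (0:ℝ) < 1 - F t := by linarith [hFt.2]
  have hp0 : p < 0 := by
    rw [hp]; exact Real.log_neg h1Ft (by linarith [hFt.1])
  -- for y > 0, u(y) ∈ Ioo 0 1
  have hu : ∀ y : ℝ, 0 < y → 1 - Real.exp (-(y - p)) ∈ Set.Ioo (0:ℝ) 1 := by
    intro y hy
    constructor
    · have : Real.exp (-(y - p)) < 1 := by
        rw [Real.exp_lt_one_iff]; linarith
      linarith
    · linarith [Real.exp_pos (-(y - p))]
  have hae : ∀ᵐ y ∂(expMeasure 1), 1 - Real.exp (-(y - p)) ∈ Set.Ioo (0:ℝ) 1 := by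
    rw [ae_iff]
    refine measure_mono_null (fun y hy => ?_) expM_Iic_zero
    simp only [Set.mem_setOf_eq] at hy
    by_contra h
    exact hy (hu y (lt_of_not_ge h))
  refine ⟨hp0, hae, ?_, ?_⟩
  · -- x > t
    intro x hx
    have hx0 : (0:ℝ) < x := lt_trans ht hx
    have hFx : F x ∈ Set.Ioo (0:ℝ) 1 := hF_bij.mapsTo hx0
    have h1Fx : (0:ℝ) < 1 - F x := by linarith [hFx.2]
    have hFtx : F t < F x := hF_mono ht hx0 hx
    set c : ℝ := p - Real.log (1 - F x) with hc
    have hc0 : 0 ≤ c := by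
      rw [hc, hp, sub_nonneg]
      exact Real.log_le_log h1Fx (by linarith)
    -- pointwise characterization on Ioi 0
    have hchar : ∀ y : ℝ, 0 < y →
        (Finv (1 - Real.exp (-(y - p))) ≤ x ↔ y ≤ c) := by
      intro y hy
      set u := 1 - Real.exp (-(y - p)) with hud
      obtain ⟨hFinv0, hFinvF⟩ := hFinv u (hu y hy)
      have key : Finv u ≤ x ↔ F (Finv u) ≤ F x :=
        (hF_mono.le_iff_le hFinv0 hx0).symm
      rw [key, hFinvF, hud]
      constructor
      · intro h
        have h2 : 1 - F x ≤ Real.exp (-(y - p)) := by linarith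
        have := Real.log_le_log h1Fx h2
        rw [Real.log_exp] at this
        simp only [hc]; linarith
      · intro h
        have h2 : Real.log (1 - F x) ≤ -(y - p) := by simp only [hc] at h; linarith
        have := Real.exp_le_exp.mpr h2
        rw [Real.exp_log h1Fx] at this
        linarith
    set S := {y : ℝ | Finv (1 - Real.exp (-(y - p))) ≤ x} with hS
    have hsub1 : S ⊆ Set.Iic 0 ∪ Set.Iic c := by
      intro y hy
      rcases le_or_gt y 0 with h | h
      · exact Or.inl h
      · exact Or.inr ((hchar y h).mp hy)
    have hsub2 : Set.Ioc 0 c ⊆ S := by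
      intro y ⟨hy1, hy2⟩
      exact (hchar y hy1).mpr hy2
    have hIoc : expMeasure 1 (Set.Ioc 0 c) = expMeasure 1 (Set.Iic c) := by
      have : Set.Iic c ⊆ Set.Iic 0 ∪ Set.Ioc 0 c := by
        intro y hy
        rcases le_or_gt y 0 with h | h
        · exact Or.inl h
        · exact Or.inr ⟨h, hy⟩
      refine le_antisymm (measure_mono Set.Ioc_subset_Iic_self) ?_
      calc expMeasure 1 (Set.Iic c) ≤ expMeasure 1 (Set.Iic 0 ∪ Set.Ioc 0 c) := measure_mono this
        _ ≤ expMeasure 1 (Set.Iic 0) + expMeasure 1 (Set.Ioc 0 c) := measure_union_le _ _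
        _ = expMeasure 1 (Set.Ioc 0 c) := by rw [expM_Iic_zero, zero_add]
    have hSm : expMeasure 1 S = expMeasure 1 (Set.Iic c) := by
      refine le_antisymm ?_ ?_
      · calc expMeasure 1 S ≤ expMeasure 1 (Set.Iic 0 ∪ Set.Iic c) := measure_mono hsub1
          _ ≤ expMeasure 1 (Set.Iic 0) + expMeasure 1 (Set.Iic c) := measure_union_le _ _
          _ = expMeasure 1 (Set.Iic c) := by rw [expM_Iic_zero, zero_add]
      · rw [← hIoc]; exact measure_mono hsub2
    rw [hSm, expM_Iic, if_pos hc0]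
    congr 1
    have hexp : Real.exp (-c) = (1 - F x) / (1 - F t) := by
      rw [hc, hp, neg_sub, Real.exp_sub, Real.exp_log h1Fx, Real.exp_log h1Ft]
    rw [hexp]
    field_simp
    ring
  · -- x ≤ t
    intro x hx
    refine measure_mono_null (fun y hy => ?_) expM_Iic_zero
    simp only [Set.mem_setOf_eq] at hy
    by_contra h
    have hy0 : 0 < y := lt_of_not_ge h
    set u := 1 - Real.exp (-(y - p)) with hud
    obtain ⟨hFinv0, hFinvF⟩ := hFinv u (hu y hy0)
    have hx0 : (0:ℝ) < x := lt_of_lt_of_le hFinv0 hy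
    have h2 : F (Finv u) ≤ F t := by
      calc F (Finv u) ≤ F x := (hF_mono.le_iff_le hFinv0 hx0).mpr hy
        _ ≤ F t := (hF_mono.le_iff_le hx0 ht).mpr hx
    rw [hFinvF] at h2
    have hep : Real.exp p = 1 - F t := by rw [hp, Real.exp_log h1Ft]
    have h3 : Real.exp p ≤ Real.exp (-(y - p)) := by
      rw [hep]; simp only [hud] at h2; linarith
    rw [Real.exp_le_exp] at h3
    linarith
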